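/- Let $Z$ be an object of a $k$-additive category with $\mathrm{End}(Z)$ local and finite-dimensional over $k$, let $Y$ be another object, and let $g_2 : Z \to Y$ be a nonzero morphism (more precisely the relevant component of a triangle map). Fix a $k$-subspace $N \subseteq \mathrm{End}(Y)$ consisting of nilpotent endomorphisms and closed under addition. Then the set $G' = \{ d' \in \mathrm{End}(Z) : d' g_2 = g_2 b' \text{ for some } b' \in N \}$ is a $k$-subspace of $\mathrm{End}(Z)$, and every element of $G'$ is nilpotent, so $1 - d'$ is invertible for all $d' \in G'$. -/
import Mathlib


open CategoryTheory

open Polynomial in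
lemma nonunit_isNilpotent_of_local {k : Type*} [Field k] {R : Type*} [Ring R]
    [Algebra k R] [FiniteDimensional k R] [IsLocalRing R] {a : R} (ha : ¬ IsUnit a) :
    IsNilpotent a := by
  have hint : IsIntegral k a := Algebra.IsIntegral.isIntegral a
  have hp0 : minpoly k a ≠ 0 := minpoly.ne_zero hint
  set m := (minpoly k a).rootMultiplicity 0 with hm
  obtain ⟨q, hq, hndvd⟩ :=
    (minpoly k a).exists_eq_pow_rootMultiplicity_mul_and_not_dvd hp0 0
  rw [map_zero, sub_zero] at hq hndvd
  have hu : q.coeff 0 ≠ 0 := fun h => hndvd (X_dvd_iff.2 h)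
  set u : k := q.coeff 0 with huu
  have hqd : X * q.divX + C u = q := X_mul_divX_add q
  set s : R := aeval a q.divX with hs
  have hcomm : Commute a s :=
    Algebra.commute_of_mem_adjoin_self (aeval_mem_adjoin_singleton k a)
  have haq : a ^ m * aeval a q = 0 := by
    have := minpoly.aeval k a
    rw [hq] at this
    simpa using this
  have haq2 : aeval a q = a * s + algebraMap k R u := by
    conv_lhs => rw [← hqd]
    simp [hs]
  set c : R := (-u⁻¹) • s with hc
  have hccomm : Commute a c := hcomm.smul_right _
  have hkey : a ^ m = a ^ (m + 1) * c := by
    have h1 : a ^ (m + 1) * s + u • a ^ m = 0 := by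
      have h0 := haq
      rw [haq2, mul_add, ← mul_assoc, ← pow_succ, Algebra.algebraMap_eq_smul_one,
        mul_smul_comm, mul_one] at h0
      exact h0
    have h2 : a ^ (m + 1) * s = -(u • a ^ m) := eq_neg_of_add_eq_zero_left h1
    rw [hc, mul_smul_comm, h2, neg_smul, smul_neg, neg_neg, smul_smul,
      inv_mul_cancel₀ hu, one_smul]
  rcases Nat.eq_zero_or_pos m with hm0 | hmpos
  · exfalso
    apply ha
    rw [hm0, pow_zero, zero_add, pow_one] at hkey
    exact isUnit_iff_exists.mpr ⟨c, hkey.symm, hccomm.eq ▸ hkey.symm⟩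
  have hclaim : ∀ j, a ^ m = a ^ (m + j) * c ^ j := by
    intro j
    induction j with
    | zero => simp
    | succ j ih =>
      have hstep : a ^ (m + (j + 1)) * c ^ (j + 1) = a ^ (m + j) * c ^ j := by
        calc a ^ (m + (j + 1)) * c ^ (j + 1)
            = a ^ j * a ^ (m + 1) * (c * c ^ j) := by
              rw [show m + (j + 1) = j + (m + 1) by ring, pow_add, pow_succ' c j]
          _ = a ^ j * (a ^ (m + 1) * c) * c ^ j := by
              rw [mul_assoc (a ^ j), mul_assoc (a ^ j), mul_assoc (a ^ (m + 1))]
          _ = a ^ j * a ^ m * c ^ j := by rw [← hkey]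
          _ = a ^ (m + j) * c ^ j := by rw [← pow_add, Nat.add_comm]
      rw [ih, ← hstep]
  set e : R := a ^ m * c ^ m with he
  have hpowcomm : c ^ m * a ^ m = a ^ m * c ^ m := ((hccomm.pow_pow m m).symm).eq
  have hidem : e * e = e := by
    calc e * e = a ^ m * c ^ m * a ^ m * c ^ m := by rw [he, ← mul_assoc]
      _ = a ^ m * (c ^ m * a ^ m) * c ^ m := by rw [mul_assoc (a ^ m) (c ^ m) (a ^ m)]
      _ = a ^ m * (a ^ m * c ^ m) * c ^ m := by rw [hpowcomm]
      _ = a ^ (m + m) * c ^ m * c ^ m := by rw [pow_add, mul_assoc (a ^ m) (a ^ m) (c ^ m)]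
      _ = a ^ m * c ^ m := by rw [← hclaim m]
      _ = e := he.symm
  have hme : a ^ m * e = a ^ m := by
    rw [he, ← mul_assoc, ← pow_add, ← hclaim m]
  rcases IsLocalRing.isUnit_or_isUnit_of_add_one (a := e) (b := 1 - e)
      (by rw [add_sub_cancel]) with hunit | hunit
  · exfalso
    apply ha
    have he1 : e = 1 := hunit.mul_left_cancel (by rw [mul_one, hidem])
    rw [he] at he1
    have hca : c ^ m * a ^ m = 1 := by rw [hpowcomm, he1]
    have : IsUnit (a ^ m) := isUnit_iff_exists.mpr ⟨c ^ m, he1, hca⟩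
    exact (isUnit_pow_iff hmpos.ne').mp this
  · have he0 : e = 0 := by
      have h0 : e * (1 - e) = 0 * (1 - e) := by
        rw [mul_sub, mul_one, hidem, sub_self, zero_mul]
      exact hunit.mul_right_cancel h0
    exact ⟨m, by rw [← hme, he0, mul_zero]⟩

/-- Let `Z` have a local finite-dimensional endomorphism ring, `g₂ : Z ⟶ Y` a nonzero
morphism and `N` a `k`-subspace of `End Y` consisting of nilpotent endomorphisms.  Then
`G' = { d' ∈ End Z : d' g₂ = g₂ b' for some b' ∈ N }` is a `k`-subspace of `End Z`, all of
whose elements are nilpotent; hence `1 - d'` is invertible for all `d' ∈ G'`. -/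
theorem stabilizer_is_subspace_of_nilpotents
    {k : Type*} [Field k]
    {C : Type*} [Category C] [Preadditive C] [Linear k C]
    [∀ X Y : C, FiniteDimensional k (X ⟶ Y)]
    {Z Y : C} [IsLocalRing (End Z)]
    (g₂ : Z ⟶ Y) (hg₂ : g₂ ≠ 0)
    (N : Submodule k (Y ⟶ Y)) (hN : ∀ b' ∈ N, IsNilpotent (show End Y from b')) :
    ∃ G' : Submodule k (Z ⟶ Z),
      (G' : Set (Z ⟶ Z)) = {d' : Z ⟶ Z | ∃ b' ∈ N, d' ≫ g₂ = g₂ ≫ b'} ∧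
      ∀ d' ∈ G', IsNilpotent (show End Z from d') ∧
        IsUnit (1 - (show End Z from d')) := by
  refine ⟨{
      carrier := {d' : Z ⟶ Z | ∃ b' ∈ N, d' ≫ g₂ = g₂ ≫ b'}
      add_mem' := ?_
      zero_mem' := ⟨0, N.zero_mem, by simp⟩
      smul_mem' := ?_ }, rfl, ?_⟩
  · rintro d₁ d₂ ⟨b₁, hb₁, h₁⟩ ⟨b₂, hb₂, h₂⟩
    exact ⟨b₁ + b₂, N.add_mem hb₁ hb₂, by
      rw [Preadditive.add_comp, h₁, h₂, Preadditive.comp_add]⟩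
  · rintro t d ⟨b, hb, h⟩
    exact ⟨t • b, N.smul_mem t hb, by rw [Linear.smul_comp, h, Linear.comp_smul]⟩
  · intro d' hd'
    obtain ⟨b', hbN, hcomm⟩ := hd'
    obtain ⟨n, hbn⟩ := hN b' hbN
    -- powers intertwine
    have hpow : ∀ j : ℕ, ((show End Z from d') ^ j : Z ⟶ Z) ≫ g₂ =
        g₂ ≫ ((show End Y from b') ^ j : Y ⟶ Y) := by
      intro j
      induction j with
      | zero =>
        show ((1 : End Z) : Z ⟶ Z) ≫ g₂ = g₂ ≫ ((1 : End Y) : Y ⟶ Y)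
        rw [End.one_def, End.one_def, Category.id_comp, Category.comp_id]
      | succ j ih =>
        show (d' ≫ ((show End Z from d') ^ j : Z ⟶ Z)) ≫ g₂ =
          g₂ ≫ (b' ≫ ((show End Y from b') ^ j : Y ⟶ Y))
        rw [Category.assoc, ih, ← Category.assoc, hcomm, Category.assoc]
    have hzero : ((show End Z from d') ^ n : Z ⟶ Z) ≫ g₂ = 0 := by
      rw [hpow n]
      have : ((show End Y from b') ^ n : Y ⟶ Y) = (0 : Y ⟶ Y) := hbn
      rw [this, Limits.comp_zero]
    -- d' is not a unit in End Z
    have hnu : ¬ IsUnit (show End Z from d') := by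
      intro hu
      obtain ⟨v, hv⟩ := hu.pow n
      apply hg₂
      have h1 : (v.inv : Z ⟶ Z) ≫ (v.val : Z ⟶ Z) = 𝟙 Z := v.val_inv
      calc g₂ = 𝟙 Z ≫ g₂ := (Category.id_comp g₂).symm
        _ = ((v.inv : Z ⟶ Z) ≫ (v.val : Z ⟶ Z)) ≫ g₂ := by rw [h1]
        _ = (v.inv : Z ⟶ Z) ≫ ((v.val : Z ⟶ Z) ≫ g₂) := Category.assoc _ _ _
        _ = (v.inv : Z ⟶ Z) ≫ (((show End Z from d') ^ n : Z ⟶ Z) ≫ g₂) := by rw [hv]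
        _ = (v.inv : Z ⟶ Z) ≫ (0 : Z ⟶ Y) := by rw [hzero]
        _ = 0 := Limits.comp_zero
    haveI : FiniteDimensional k (End Z) :=
      (inferInstance : FiniteDimensional k (Z ⟶ Z))
    have hnil := nonunit_isNilpotent_of_local (k := k) hnu
    exact ⟨hnil, hnil.isUnit_one_sub⟩
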